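/- Let A, B ∈ ℝ^{n×n} and let D, E be diagonal matrices whose diagonal entries all belong to {-1, +1}. Then (A, B) is diagonally Riccati stable if and only if (DAD, DBE) is diagonally Riccati stable. -/

import Mathlib

open Matrix

/-- The pair `(A, B)` is diagonally Riccati stable. -/
def DiagRiccatiStable {m : ℕ} (A B : Matrix (Fin m) (Fin m) ℝ) : Prop :=
  ∃ P Q : Matrix (Fin m) (Fin m) ℝ, P.IsDiag ∧ Q.IsDiag ∧ P.PosDef ∧ Q.PosDef ∧
    (-(Aᵀ * P + P * A + Q + P * B * Q⁻¹ * Bᵀ * P)).PosDef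

section aux

variable {n : ℕ}

private lemma diag_comm {X Y : Matrix (Fin n) (Fin n) ℝ} (hX : X.IsDiag) (hY : Y.IsDiag) :
    X * Y = Y * X := by
  rw [← hX.diagonal_diag, ← hY.diagonal_diag, diagonal_mul_diagonal, diagonal_mul_diagonal]
  exact congrArg _ (funext fun i => mul_comm _ _)

private lemma swap_mul {X Y : Matrix (Fin n) (Fin n) ℝ} (h : X * Y = Y * X)
    (Z : Matrix (Fin n) (Fin n) ℝ) : X * (Y * Z) = Y * (X * Z) := by
  rw [← Matrix.mul_assoc, h, Matrix.mul_assoc]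

private lemma cancel_mul {X : Matrix (Fin n) (Fin n) ℝ} (h : X * X = 1)
    (Z : Matrix (Fin n) (Fin n) ℝ) : X * (X * Z) = Z := by
  rw [← Matrix.mul_assoc, h, Matrix.one_mul]

private lemma sq_one {D : Matrix (Fin n) (Fin n) ℝ} (hD : D.IsDiag)
    (hDs : ∀ i : Fin n, D i i = 1 ∨ D i i = -1) : D * D = 1 := by
  rw [← hD.diagonal_diag, diagonal_mul_diagonal]
  ext i j
  by_cases hij : i = j
  · subst hij
    rcases hDs i with h | h <;>
      simp [Matrix.diagonal_apply_eq, Matrix.one_apply_eq, Matrix.diag, h]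
  · simp [Matrix.diagonal_apply_ne _ hij, Matrix.one_apply_ne hij]

private lemma posDef_conj {M S : Matrix (Fin n) (Fin n) ℝ} (hM : M.PosDef)
    (hSt : Sᵀ = S) (hSS : S * S = 1) : (S * M * S).PosDef := by
  have hSh : Sᴴ = S := by rw [conjTranspose_eq_transpose_of_trivial, hSt]
  rw [posDef_iff_dotProduct_mulVec]
  constructor
  · have := isHermitian_conjTranspose_mul_mul S hM.1
    rwa [hSh] at this
  · intro x hx
    have hx' : S *ᵥ x ≠ 0 := by
      intro h
      apply hx
      have : S *ᵥ (S *ᵥ x) = x := by rw [Matrix.mulVec_mulVec, hSS, Matrix.one_mulVec]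
      rw [h, Matrix.mulVec_zero] at this
      exact this.symm
    have := hM.dotProduct_mulVec_pos hx'
    calc (0 : ℝ) < dotProduct (star (S *ᵥ x)) (M *ᵥ (S *ᵥ x)) := this
      _ = dotProduct (star x) ((S * M * S) *ᵥ x) := by
          simp only [star_trivial]
          rw [← Matrix.mulVec_mulVec, ← Matrix.mulVec_mulVec,
            Matrix.dotProduct_mulVec x S, ← hSt, Matrix.vecMul_transpose, hSt]

private lemma forward_dir {n : ℕ} (A B D E : Matrix (Fin n) (Fin n) ℝ)
    (hD : D.IsDiag) (hE : E.IsDiag)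
    (hDs : ∀ i : Fin n, D i i = 1 ∨ D i i = -1)
    (hEs : ∀ i : Fin n, E i i = 1 ∨ E i i = -1) :
    DiagRiccatiStable A B → DiagRiccatiStable (D * A * D) (D * B * E) := by
  rintro ⟨P, Q, hPd, hQd, hPp, hQp, hR⟩
  have hDD := sq_one hD hDs
  have hEE := sq_one hE hEs
  have hDt : Dᵀ = D := hD.isSymm
  have hEt : Eᵀ = E := hE.isSymm
  have hQid : (Q⁻¹).IsDiag := by
    rw [← hQd.diagonal_diag, Matrix.inv_diagonal]
    exact Matrix.isDiag_diagonal _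
  have cDP : D * P = P * D := diag_comm hD hPd
  have cDQ : D * Q = Q * D := diag_comm hD hQd
  have cEQ : E * Q⁻¹ = Q⁻¹ * E := diag_comm hE hQid
  refine ⟨P, Q, hPd, hQd, hPp, hQp, ?_⟩
  have h1 : (D * A * D)ᵀ * P = D * (Aᵀ * P) * D := by
    simp only [Matrix.transpose_mul, hDt, Matrix.mul_assoc]
    rw [cDP]
  have h2 : P * (D * A * D) = D * (P * A) * D := by
    simp only [Matrix.mul_assoc]
    rw [swap_mul cDP.symm]
  have h3 : D * Q * D = Q := by
    rw [Matrix.mul_assoc, swap_mul cDQ, hDD, Matrix.mul_one]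
  have h4 : P * (D * B * E) * Q⁻¹ * (D * B * E)ᵀ * P = D * (P * B * Q⁻¹ * Bᵀ * P) * D := by
    simp only [Matrix.transpose_mul, hDt, hEt, Matrix.mul_assoc]
    rw [swap_mul cDP.symm, swap_mul cEQ, cancel_mul hEE, cDP]
  have key : (D * A * D)ᵀ * P + P * (D * A * D) + Q + P * (D * B * E) * Q⁻¹ * (D * B * E)ᵀ * P
      = D * (Aᵀ * P + P * A + Q + P * B * Q⁻¹ * Bᵀ * P) * D := by
    rw [h1, h2, h4]
    simp only [Matrix.mul_add, Matrix.add_mul, h3]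
  rw [key]
  have hneg : -(D * (Aᵀ * P + P * A + Q + P * B * Q⁻¹ * Bᵀ * P) * D)
      = D * (-(Aᵀ * P + P * A + Q + P * B * Q⁻¹ * Bᵀ * P)) * D := by
    rw [Matrix.mul_neg, Matrix.neg_mul]
  rw [hneg]
  exact posDef_conj hR hDt hDD

end aux

theorem diag_riccati_sign_similarity {n : ℕ} (A B D E : Matrix (Fin n) (Fin n) ℝ)
    (hD : D.IsDiag) (hE : E.IsDiag)
    (hDs : ∀ i : Fin n, D i i = 1 ∨ D i i = -1)
    (hEs : ∀ i : Fin n, E i i = 1 ∨ E i i = -1) :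
    DiagRiccatiStable A B ↔ DiagRiccatiStable (D * A * D) (D * B * E) := by
  have hDD := sq_one hD hDs
  have hEE := sq_one hE hEs
  constructor
  · exact forward_dir A B D E hD hE hDs hEs
  · intro h
    have h' := forward_dir (D * A * D) (D * B * E) D E hD hE hDs hEs h
    have eA : D * (D * A * D) * D = A := by
      simp only [Matrix.mul_assoc]
      rw [hDD, Matrix.mul_one, cancel_mul hDD]
    have eB : D * (D * B * E) * E = B := by
      simp only [Matrix.mul_assoc]
      rw [hEE, Matrix.mul_one, cancel_mul hDD]
    rwa [eA, eB] at h'
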